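/- Let p be an odd prime, χ the quadratic (Legendre) character of F_p extended by χ(0)=0, and S a nonempty subset of F_p. Assume the Weil character-sum bound: |∑_{b ∈ F_p} χ(∏_{x ∈ S}(x+b))| ≤ (|S| - 1) * √p. If b is chosen uniformly at random from F_p and x + b ≠ 0 for all x ∈ S, then the probability (over b satisfying the nonvanishing condition, or equivalently counting b ∈ F_p for which additionally no x+b vanishes) that |{x ∈ S : χ(x+b) = -1}| is odd is at least 1/2 - (|S|-1)/(2√p) - |S|/p. -/

import Mathlib

open Classical in
noncomputable def legChar (p : ℕ) (a : ZMod p) : ℤ :=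
  if a = 0 then 0 else if IsSquare a then 1 else -1

open Classical

lemma legChar_eq_quadChar (p : ℕ) [Fact p.Prime] (a : ZMod p) :
    legChar p a = quadraticChar (ZMod p) a := by
  rw [quadraticChar_apply, quadraticCharFun]
  unfold legChar
  by_cases h0 : a = 0
  · simp [h0]
  · by_cases hsq : IsSquare a <;> simp [h0, hsq]

open Classical in
theorem parity_probability_lower_bound (p : ℕ) (hp : p.Prime) (hodd : p ≠ 2)
    [Fact p.Prime] (S : Finset (ZMod p)) (hS : S.Nonempty)
    (hWeil : |(∑ b : ZMod p, legChar p (∏ x ∈ S, (x + b)) : ℝ)| ≤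
      ((S.card : ℝ) - 1) * Real.sqrt p) :
    ((Finset.univ.filter fun b : ZMod p =>
        (∀ x ∈ S, x + b ≠ 0) ∧
          Odd (S.filter fun x => legChar p (x + b) = -1).card).card : ℝ) / p ≥
      1 / 2 - ((S.card : ℝ) - 1) / (2 * Real.sqrt p) - (S.card : ℝ) / p := by
  classical
  set n := S.card with hn
  set A := Finset.univ.filter fun b : ZMod p =>
      (∀ x ∈ S, x + b ≠ 0) ∧
        Odd (S.filter fun x => legChar p (x + b) = -1).card with hA
  set G := Finset.univ.filter (fun b : ZMod p => ∀ x ∈ S, x + b ≠ 0) with hG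
  -- key pointwise identity on good b
  have key : ∀ b ∈ G, legChar p (∏ x ∈ S, (x + b)) =
      (-1 : ℤ) ^ (S.filter fun x => legChar p (x + b) = -1).card := by
    intro b hb
    rw [hG, Finset.mem_filter] at hb
    have hne := hb.2
    rw [legChar_eq_quadChar, map_prod]
    have : ∀ x ∈ S, ((quadraticChar (ZMod p)) (x + b) : ℤ) =
        if legChar p (x + b) = -1 then -1 else 1 := by
      intro x hx
      rw [← legChar_eq_quadChar]
      unfold legChar
      have h0 : x + b ≠ 0 := hne x hx
      by_cases hsq : IsSquare (x + b) <;> simp [h0, hsq]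
    rw [Finset.prod_congr rfl this, Finset.prod_ite, Finset.prod_const,
      Finset.prod_const, one_pow, mul_one]
  -- cardinality split: A together with its complement within G
  have hAG : G.filter (fun b =>
      Odd (S.filter fun x => legChar p (x + b) = -1).card) = A := by
    rw [hA, hG, Finset.filter_filter]
  have hsplit : A.card + ((G.filter fun b =>
      ¬ Odd (S.filter fun x => legChar p (x + b) = -1).card).card) = G.card := by
    rw [← hAG]
    exact Finset.card_filter_add_card_filter_not _
  -- sum formula
  have sum_eq : (∑ b : ZMod p, legChar p (∏ x ∈ S, (x + b))) =
      (G.card : ℤ) - 2 * A.card := by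
    rw [← Finset.sum_filter_add_sum_filter_not Finset.univ
      (fun b : ZMod p => ∀ x ∈ S, x + b ≠ 0)]
    have hzero : ∑ b ∈ Finset.univ.filter
        (fun b : ZMod p => ¬ ∀ x ∈ S, x + b ≠ 0), legChar p (∏ x ∈ S, (x + b)) = 0 := by
      apply Finset.sum_eq_zero
      intro b hb
      rw [Finset.mem_filter] at hb
      push_neg at hb
      obtain ⟨x, hx, hx0⟩ := hb.2
      rw [Finset.prod_eq_zero hx hx0]
      simp [legChar]
    rw [← hG] at *
    rw [hzero, add_zero]
    have : ∀ b ∈ G, legChar p (∏ x ∈ S, (x + b)) =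
        if Odd (S.filter fun x => legChar p (x + b) = -1).card then (-1 : ℤ) else 1 := by
      intro b hb
      rw [key b hb]
      by_cases ho : Odd (S.filter fun x => legChar p (x + b) = -1).card
      · simp [ho, Odd.neg_one_pow ho]
      · simp [ho, (Nat.not_odd_iff_even.mp ho).neg_one_pow]
    rw [Finset.sum_congr rfl this, Finset.sum_ite, Finset.sum_const, Finset.sum_const,
      hAG]
    simp only [nsmul_eq_mul, mul_neg_one, mul_one]
    omega
  -- G is large
  have hGcard : (p : ℤ) - n ≤ G.card := by
    have hbad : (Finset.univ.filter (fun b : ZMod p => ¬ ∀ x ∈ S, x + b ≠ 0)).card ≤ n := by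
      have hsub : (Finset.univ.filter (fun b : ZMod p => ¬ ∀ x ∈ S, x + b ≠ 0)) ⊆
          S.image (fun x => -x) := by
        intro b hb
        rw [Finset.mem_filter] at hb
        push_neg at hb
        obtain ⟨x, hx, hx0⟩ := hb.2
        exact Finset.mem_image.mpr ⟨x, hx, by linear_combination -hx0⟩
      exact (Finset.card_le_card hsub).trans (Finset.card_image_le)
    have := Finset.card_filter_add_card_filter_not
      (s := (Finset.univ : Finset (ZMod p))) (p := fun b : ZMod p => ∀ x ∈ S, x + b ≠ 0)
    rw [Finset.card_univ, ZMod.card] at this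
    rw [hG]
    omega
  -- real arithmetic
  have hp0 : (0 : ℝ) < p := by exact_mod_cast hp.pos
  have hs0 : (0 : ℝ) < Real.sqrt p := Real.sqrt_pos.mpr hp0
  have hss : Real.sqrt p * Real.sqrt p = p := Real.mul_self_sqrt (le_of_lt hp0)
  have hbound : (G.card : ℝ) - 2 * A.card ≤ ((n : ℝ) - 1) * Real.sqrt p :=
    calc (G.card : ℝ) - 2 * A.card
        = ((∑ b : ZMod p, legChar p (∏ x ∈ S, (x + b)) : ℤ) : ℝ) := by
          rw [sum_eq]; push_cast; ring
      _ = ∑ b : ZMod p, (legChar p (∏ x ∈ S, (x + b)) : ℝ) := by push_cast; rfl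
      _ ≤ |∑ b : ZMod p, (legChar p (∏ x ∈ S, (x + b)) : ℝ)| := le_abs_self _
      _ ≤ _ := hWeil
  have hGR : (p : ℝ) - n ≤ G.card := by exact_mod_cast hGcard
  have h2A : (p : ℝ) - n - ((n : ℝ) - 1) * Real.sqrt p ≤ 2 * A.card := by linarith
  have hn1 : (1 : ℝ) ≤ n := by exact_mod_cast hS.card_pos
  rw [ge_iff_le, le_div_iff₀ hp0]
  set s := Real.sqrt p with hsdef
  have hkey : (1 / 2 - ((n : ℝ) - 1) / (2 * s) - (n : ℝ) / p) * p =
      (p : ℝ) / 2 - ((n : ℝ) - 1) * s / 2 - n := by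
    rw [← hss]
    field_simp
  rw [hkey]
  linarith [h2A, hn1]
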